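/- Let τ_K, τ_M > 1 with τ_K⁻¹ + τ_M⁻¹ < 1, λ± := (√(τ_M⁻¹(1−τ_K⁻¹)) ± √(τ_K⁻¹(1−τ_M⁻¹)))², ρ_c² := 1/√((τ_M−1)(τ_K−1)), and let 𝒢(z) := [τ_M⁻¹+τ_K⁻¹−z+√((z−λ₋)(z−λ₊))]/(2z(z−1)) + 1/(zτ_K) for z ∈ (λ₊, 1] (positive square root). Consider, for ρ² ∈ [0,1], the equation z·[1−2τ_K⁻¹−(1/z)(τ_M⁻¹−τ_K⁻¹)−(1−z)𝒢(z)]·[1−τ_K⁻¹−τ_M⁻¹−(1−z)𝒢(z)] / [1−τ_M⁻¹−zτ_K⁻¹−z(1−z)𝒢(z)]² = ρ². Then: (a) the left-hand side equals [z − τ_M⁻¹ − τ_K⁻¹ + 2τ_M⁻¹τ_K⁻¹ + √((z−λ₋)(z−λ₊))]/(2(1−τ_M⁻¹)(1−τ_K⁻¹)), which is strictly increasing on [λ₊,1] with value ρ_c² at z = λ₊ and value 1 at z = 1; (b) if 0 ≤ ρ² ≤ ρ_c² the equation has no solution z ∈ (λ₊, 1]; (c) if ρ_c² < ρ² ≤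 1 it has a unique solution z_ρ ∈ (λ₊, 1], given explicitly by z_ρ = ((τ_K−1)ρ² + 1)((τ_M−1)ρ² + 1)/(ρ²τ_Kτ_M), and equivalently ρ² = [z_ρ − τ_M⁻¹ − τ_K⁻¹ + 2τ_M⁻¹τ_K⁻¹ + √((z_ρ−λ₋)(z_ρ−λ₊))]/(2(1−τ_M⁻¹)(1−τ_K⁻¹)). -/

import Mathlib

open MeasureTheory ProbabilityTheory Filter Matrix

noncomputable section

/-- Euclidean dot product on `Fin n → ℝ`. -/
def dotR {n : ℕ} (a b : Fin n → ℝ) : ℝ := ∑ i, a i * b i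

/-- The (cross-)covariance matrix `E[X Yᵀ]` of two mean-zero random vectors. -/
def covMat {Ω : Type} [MeasurableSpace Ω] (μ : Measure Ω) {n m : ℕ}
    (X : Ω → Fin n → ℝ) (Y : Ω → Fin m → ℝ) : Matrix (Fin n) (Fin m) ℝ :=
  Matrix.of fun i j => ∫ ω, X ω i * Y ω j ∂μ

/-- A random vector is centered (jointly) Gaussian if every linear functional of it
is a centered one-dimensional Gaussian. -/
def IsCenteredGaussianVec {Ω : Type} [MeasurableSpace Ω] (μ : Measure Ω)
    {n : ℕ} (X : Ω → Fin n → ℝ) : Prop :=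
  ∀ l : Fin n → ℝ, ∃ v : NNReal,
    Measure.map (fun ω => dotR l (X ω)) μ = gaussianReal 0 v

/-- Fourth-moment Gaussian family of random variables: mean zero and the Wick rule
for all fourth joint moments. -/
def FourthMomentGaussian {Ω : Type} [MeasurableSpace Ω] (μ : Measure Ω)
    {ι : Type} (X : ι → Ω → ℝ) : Prop :=
  (∀ i, ∫ ω, X i ω ∂μ = 0) ∧
  ∀ i j k l, ∫ ω, X i ω * X j ω * X k ω * X l ω ∂μ =
    (∫ ω, X i ω * X j ω ∂μ) * (∫ ω, X k ω * X l ω ∂μ)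
    + (∫ ω, X i ω * X k ω ∂μ) * (∫ ω, X j ω * X l ω ∂μ)
    + (∫ ω, X i ω * X l ω ∂μ) * (∫ ω, X j ω * X k ω ∂μ)

/-- Convergence in probability to a constant, along a sequence of probability spaces. -/
def TendstoInProb {Ω : ℕ → Type} [∀ S, MeasurableSpace (Ω S)]
    (μ : ∀ S, Measure (Ω S)) (X : ∀ S, Ω S → ℝ) (c : ℝ) : Prop :=
  ∀ ε : ℝ, 0 < ε →
    Tendsto (fun S => μ S {ω | ε ≤ |X S ω - c|}) atTop (nhds 0)

/-- `lam` is an antitone enumeration (with multiplicity) of the eigenvalues of `T`. -/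
def EigenvaluesOf {n : ℕ} (T : Matrix (Fin n) (Fin n) ℝ) (lam : Fin n → ℝ) : Prop :=
  Antitone lam ∧ T.charpoly = ∏ i, (Polynomial.X - Polynomial.C (lam i))

/-- The `K × K` matrix whose eigenvalues are the squared sample canonical
correlations between the rows of `U` and of `V`. -/
def ccaMatrix {K M S : ℕ} (U : Matrix (Fin K) (Fin S) ℝ) (V : Matrix (Fin M) (Fin S) ℝ) :
    Matrix (Fin K) (Fin K) ℝ :=
  (U * Uᵀ)⁻¹ * (U * Vᵀ) * (V * Vᵀ)⁻¹ * (V * Uᵀ)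

/-- The companion `M × M` matrix. -/
def ccaMatrixV {K M S : ℕ} (U : Matrix (Fin K) (Fin S) ℝ) (V : Matrix (Fin M) (Fin S) ℝ) :
    Matrix (Fin M) (Fin M) ℝ :=
  (V * Vᵀ)⁻¹ * (V * Uᵀ) * (U * Uᵀ)⁻¹ * (U * Vᵀ)

/-- `λ₊` resp. `λ₋`. -/
def lambdaPlus (τK τM : ℝ) : ℝ :=
  (Real.sqrt (τM⁻¹ * (1 - τK⁻¹)) + Real.sqrt (τK⁻¹ * (1 - τM⁻¹)))^2

def lambdaMinus (τK τM : ℝ) : ℝ :=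
  (Real.sqrt (τM⁻¹ * (1 - τK⁻¹)) - Real.sqrt (τK⁻¹ * (1 - τM⁻¹)))^2

/-- the detection threshold `ρ_c²`. -/
def rhoc2 (τK τM : ℝ) : ℝ := 1 / Real.sqrt ((τM - 1) * (τK - 1))

/-- the outlier location `z_ρ` (as a function of `ρ²`). -/
def zrho (τK τM ρ2 : ℝ) : ℝ :=
  ((τK - 1) * ρ2 + 1) * ((τM - 1) * ρ2 + 1) / (ρ2 * τK * τM)

/-- limit of `sin² θ_x`. -/
def sinx2 (τK τM ρ2 : ℝ) : ℝ :=
  (1 - ρ2) * (τK - 1) / ((τM - 1) * (τK - 1) * ρ2 - 1) *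
    (((τM - 1) * ρ2 + 1) / ((τK - 1) * ρ2 + 1))

/-- limit of `sin² θ_y`. -/
def siny2 (τK τM ρ2 : ℝ) : ℝ :=
  (1 - ρ2) * (τM - 1) / ((τM - 1) * (τK - 1) * ρ2 - 1) *
    (((τK - 1) * ρ2 + 1) / ((τM - 1) * ρ2 + 1))


/-- The modified Stieltjes transform of the Wachter distribution (explicit formula,
positive branch of the square root). -/
def calG (τK τM z : ℝ) : ℝ :=
  (τM⁻¹ + τK⁻¹ - z +
      Real.sqrt ((z - lambdaMinus τK τM) * (z - lambdaPlus τK τM))) / (2 * z * (z - 1))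
    + 1 / (z * τK)

/-- The left-hand side of equation (B.15) of the paper, as a function of `z`. -/
def masterLimitFun (τK τM z : ℝ) : ℝ :=
  z * (1 - 2 * τK⁻¹ - (1 / z) * (τM⁻¹ - τK⁻¹) - (1 - z) * calG τK τM z)
    * (1 - τK⁻¹ - τM⁻¹ - (1 - z) * calG τK τM z)
    / (1 - τM⁻¹ - z * τK⁻¹ - z * (1 - z) * calG τK τM z)^2

/-- The simplified form (B.24) of `masterLimitFun`. -/
def simplerFun (τK τM z : ℝ) : ℝ :=
  (z - τM⁻¹ - τK⁻¹ + 2 * τM⁻¹ * τK⁻¹ +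
      Real.sqrt ((z - lambdaMinus τK τM) * (z - lambdaPlus τK τM))) /
    (2 * (1 - τM⁻¹) * (1 - τK⁻¹))


set_option linter.unusedSectionVars false

namespace MasterEqAux

/-- squares determine nonneg reals -/
lemma sq_inj {x y : ℝ} (hx : 0 ≤ x) (hy : 0 ≤ y) (h : x ^ 2 = y ^ 2) : x = y := by
  rw [← Real.sqrt_sq hx, h, Real.sqrt_sq hy]

/-- the core polynomial identity behind (B.15) = (B.24) -/
lemma key_alg (a b z s : ℝ)
    (hs2 : s ^ 2 = z ^ 2 - 2 * (a + b - 2 * a * b) * z + (a - b) ^ 2) :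
    (z - 2 * a * z + a - b + s) * (z - 2 * b * z + b - a + s) * (2 * (1 - a) * (1 - b))
      = (z - a - b + 2 * a * b + s) * (z * (2 - a - b - z + s) ^ 2) := by
  linear_combination (2 - 2*b - 2*a + 2*a*b - 4*z + 3*b*z + 3*a*z - 2*a*b*z - z*s + z^2) * hs2

/-- helper for the final division manipulation -/
lemma div_helper {z A B C D E : ℝ} (hz : z ≠ 0) (hC : C ≠ 0) (hD : D ≠ 0)
    (key : A * B * D = E * (z * C ^ 2)) :
    z * (A / (2 * z)) * (B / (2 * z)) / (C / 2) ^ 2 = E / D := by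
  have h1 : z * (A / (2 * z)) * (B / (2 * z)) / (C / 2) ^ 2 = A * B / (z * C ^ 2) := by
    field_simp
  rw [h1, div_eq_div_iff (mul_ne_zero hz (pow_ne_zero _ hC)) hD]
  exact key

variable {τK τM : ℝ}

section basic
variable (hτK : 1 < τK) (hτM : 1 < τM) (hτ : τK⁻¹ + τM⁻¹ < 1)
include hτK hτM hτ

lemma ha0 : 0 < τK⁻¹ := inv_pos.mpr (by linarith)
lemma hb0 : 0 < τM⁻¹ := inv_pos.mpr (by linarith)
lemma ha1 : τK⁻¹ < 1 := by have := hb0 hτK hτM hτ; linarith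
lemma hb1 : τM⁻¹ < 1 := by have := ha0 hτK hτM hτ; linarith

lemma quad_eq (z : ℝ) :
    (z - lambdaMinus τK τM) * (z - lambdaPlus τK τM)
      = z ^ 2 - 2 * (τK⁻¹ + τM⁻¹ - 2 * τK⁻¹ * τM⁻¹) * z + (τK⁻¹ - τM⁻¹) ^ 2 := by
  have ha0 := ha0 hτK hτM hτ; have hb0 := hb0 hτK hτM hτ
  have ha1 := ha1 hτK hτM hτ; have hb1 := hb1 hτK hτM hτ
  have hu : Real.sqrt (τM⁻¹ * (1 - τK⁻¹)) ^ 2 = τM⁻¹ * (1 - τK⁻¹) :=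
    Real.sq_sqrt (by nlinarith)
  have hv : Real.sqrt (τK⁻¹ * (1 - τM⁻¹)) ^ 2 = τK⁻¹ * (1 - τM⁻¹) :=
    Real.sq_sqrt (by nlinarith)
  unfold lambdaMinus lambdaPlus
  linear_combination (-2*z + (Real.sqrt (τM⁻¹ * (1 - τK⁻¹)) ^ 2
      - Real.sqrt (τK⁻¹ * (1 - τM⁻¹)) ^ 2 + τM⁻¹ * (1 - τK⁻¹) - τK⁻¹ * (1 - τM⁻¹))) * hu
    + (-2*z - (Real.sqrt (τM⁻¹ * (1 - τK⁻¹)) ^ 2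
      - Real.sqrt (τK⁻¹ * (1 - τM⁻¹)) ^ 2 + τM⁻¹ * (1 - τK⁻¹) - τK⁻¹ * (1 - τM⁻¹))) * hv

lemma lam_le : lambdaMinus τK τM ≤ lambdaPlus τK τM := by
  have h1 : 0 ≤ Real.sqrt (τM⁻¹ * (1 - τK⁻¹)) := Real.sqrt_nonneg _
  have h2 : 0 ≤ Real.sqrt (τK⁻¹ * (1 - τM⁻¹)) := Real.sqrt_nonneg _
  unfold lambdaMinus lambdaPlus
  nlinarith [mul_nonneg h1 h2]

lemma lp_nonneg : 0 ≤ lambdaPlus τK τM := sq_nonneg _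

lemma lp_lt_one : lambdaPlus τK τM < 1 := by
  have ha0 := ha0 hτK hτM hτ; have hb0 := hb0 hτK hτM hτ
  have ha1 := ha1 hτK hτM hτ; have hb1 := hb1 hτK hτM hτ
  have hu : Real.sqrt (τM⁻¹ * (1 - τK⁻¹)) ^ 2 = τM⁻¹ * (1 - τK⁻¹) :=
    Real.sq_sqrt (by nlinarith)
  have hv : Real.sqrt (τK⁻¹ * (1 - τM⁻¹)) ^ 2 = τK⁻¹ * (1 - τM⁻¹) :=
    Real.sq_sqrt (by nlinarith)
  have huv : Real.sqrt (τM⁻¹ * (1 - τK⁻¹)) * Real.sqrt (τK⁻¹ * (1 - τM⁻¹))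
      = Real.sqrt ((τK⁻¹ * τM⁻¹) * ((1 - τK⁻¹) * (1 - τM⁻¹))) := by
    rw [← Real.sqrt_mul (by nlinarith)]
    congr 1
    ring
  have hab : τK⁻¹ * τM⁻¹ < (1 - τK⁻¹) * (1 - τM⁻¹) := by nlinarith
  have hlt : Real.sqrt ((τK⁻¹ * τM⁻¹) * ((1 - τK⁻¹) * (1 - τM⁻¹)))
      < (τK⁻¹ * τM⁻¹ + (1 - τK⁻¹) * (1 - τM⁻¹)) / 2 := by
    rw [show (τK⁻¹ * τM⁻¹ + (1 - τK⁻¹) * (1 - τM⁻¹)) / 2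
        = Real.sqrt (((τK⁻¹ * τM⁻¹ + (1 - τK⁻¹) * (1 - τM⁻¹)) / 2) ^ 2) from
      (Real.sqrt_sq (by nlinarith)).symm]
    apply Real.sqrt_lt_sqrt (by nlinarith)
    nlinarith [pow_pos (sub_pos.mpr hab) 2]
  unfold lambdaPlus
  nlinarith [hu, hv, huv, hlt]

lemma sqrtq_sq {z : ℝ} (hz : lambdaPlus τK τM ≤ z) :
    Real.sqrt ((z - lambdaMinus τK τM) * (z - lambdaPlus τK τM)) ^ 2
      = z ^ 2 - 2 * (τK⁻¹ + τM⁻¹ - 2 * τK⁻¹ * τM⁻¹) * z + (τK⁻¹ - τM⁻¹) ^ 2 := by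
  rw [Real.sq_sqrt, quad_eq hτK hτM hτ]
  have := lam_le hτK hτM hτ
  apply mul_nonneg <;> linarith

lemma master_eq_simpler {z : ℝ} (hz : z ∈ Set.Ioc (lambdaPlus τK τM) 1) :
    masterLimitFun τK τM z = simplerFun τK τM z := by
  have ha0 := ha0 hτK hτM hτ; have hb0 := hb0 hτK hτM hτ
  have ha1 := ha1 hτK hτM hτ; have hb1 := hb1 hτK hτM hτ
  have hK0 : τK ≠ 0 := by intro h; rw [h] at hτK; linarith
  have hD : (0:ℝ) < 2 * (1 - τM⁻¹) * (1 - τK⁻¹) := by nlinarith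
  rcases eq_or_lt_of_le hz.2 with h1 | h1
  · -- z = 1
    rw [h1]
    have hG : calG τK τM 1 = τK⁻¹ := by
      unfold calG
      norm_num
    have hq1 : ((1:ℝ) - lambdaMinus τK τM) * (1 - lambdaPlus τK τM)
        = (1 - τK⁻¹ - τM⁻¹) ^ 2 := by
      rw [quad_eq hτK hτM hτ 1]; ring
    have h1ab : (0:ℝ) < 1 - τK⁻¹ - τM⁻¹ := by linarith
    unfold masterLimitFun simplerFun
    rw [hG, hq1, Real.sqrt_sq h1ab.le]
    rw [show (1:ℝ) - τM⁻¹ - 1 * τK⁻¹ - 1 * (1 - 1) * τK⁻¹ = 1 - τK⁻¹ - τM⁻¹ from by ring]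
    rw [div_eq_div_iff (pow_ne_zero _ h1ab.ne') hD.ne']
    ring
  · -- z < 1
    have hz0 : 0 < z := lt_of_le_of_lt (lp_nonneg hτK hτM hτ) hz.1
    have hz1 : z - 1 ≠ 0 := by intro h; nlinarith
    set s := Real.sqrt ((z - lambdaMinus τK τM) * (z - lambdaPlus τK τM)) with hs'
    have hs2 : s ^ 2 = z ^ 2 - 2 * (τK⁻¹ + τM⁻¹ - 2 * τK⁻¹ * τM⁻¹) * z + (τK⁻¹ - τM⁻¹) ^ 2 :=
      sqrtq_sq hτK hτM hτ hz.1.le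
    have hs0 : 0 ≤ s := Real.sqrt_nonneg _
    have e1 : 1 - 2 * τK⁻¹ - (1 / z) * (τM⁻¹ - τK⁻¹) - (1 - z) * calG τK τM z
        = (z - 2 * τK⁻¹ * z + τK⁻¹ - τM⁻¹ + s) / (2 * z) := by
      unfold calG
      rw [← hs']
      field_simp
      ring
    have e2 : 1 - τK⁻¹ - τM⁻¹ - (1 - z) * calG τK τM z
        = (z - 2 * τM⁻¹ * z + τM⁻¹ - τK⁻¹ + s) / (2 * z) := by
      unfold calG
      rw [← hs']
      field_simp
      ring
    have e3 : 1 - τM⁻¹ - z * τK⁻¹ - z * (1 - z) * calG τK τM z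
        = (2 - τK⁻¹ - τM⁻¹ - z + s) / 2 := by
      unfold calG
      rw [← hs']
      field_simp
      ring
    have hC : (0:ℝ) < 2 - τK⁻¹ - τM⁻¹ - z + s := by linarith
    have key := key_alg τK⁻¹ τM⁻¹ z s (by linear_combination hs2)
    unfold masterLimitFun simplerFun
    rw [e1, e2, e3, ← hs']
    exact div_helper hz0.ne' hC.ne' hD.ne' (by linear_combination key)

lemma simpler_strictMono : StrictMonoOn (simplerFun τK τM) (Set.Icc (lambdaPlus τK τM) 1) := by
  have ha1 := ha1 hτK hτM hτ; have hb1 := hb1 hτK hτM hτ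
  have hlam := lam_le hτK hτM hτ
  have hD : (0:ℝ) < 2 * (1 - τM⁻¹) * (1 - τK⁻¹) := by nlinarith
  intro x hx y hy hxy
  have hsq : Real.sqrt ((x - lambdaMinus τK τM) * (x - lambdaPlus τK τM))
      ≤ Real.sqrt ((y - lambdaMinus τK τM) * (y - lambdaPlus τK τM)) := by
    apply Real.sqrt_le_sqrt
    have h1 : 0 ≤ x - lambdaPlus τK τM := by linarith [hx.1]
    have h2 : 0 ≤ y - lambdaMinus τK τM := by linarith [hy.1]
    nlinarith
  unfold simplerFun
  rw [div_lt_div_iff₀ hD hD]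
  nlinarith [hsq, hxy, hD]

lemma simpler_lp : simplerFun τK τM (lambdaPlus τK τM) = rhoc2 τK τM := by
  have ha0 := ha0 hτK hτM hτ; have hb0 := hb0 hτK hτM hτ
  have ha1 := ha1 hτK hτM hτ; have hb1 := hb1 hτK hτM hτ
  have hK0 : τK ≠ 0 := by intro h; rw [h] at hτK; linarith
  have hM0 : τM ≠ 0 := by intro h; rw [h] at hτM; linarith
  have hD : (0:ℝ) < 2 * (1 - τM⁻¹) * (1 - τK⁻¹) := by nlinarith
  have hu : Real.sqrt (τM⁻¹ * (1 - τK⁻¹)) ^ 2 = τM⁻¹ * (1 - τK⁻¹) :=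
    Real.sq_sqrt (by nlinarith)
  have hv : Real.sqrt (τK⁻¹ * (1 - τM⁻¹)) ^ 2 = τK⁻¹ * (1 - τM⁻¹) :=
    Real.sq_sqrt (by nlinarith)
  have hKM : (0:ℝ) < (τM - 1) * (τK - 1) := mul_pos (by linarith) (by linarith)
  have hw2 : Real.sqrt ((τM - 1) * (τK - 1)) ^ 2 = (τM - 1) * (τK - 1) :=
    Real.sq_sqrt hKM.le
  have hw0 : 0 < Real.sqrt ((τM - 1) * (τK - 1)) := Real.sqrt_pos.mpr hKM
  unfold simplerFun rhoc2
  rw [show (lambdaPlus τK τM - lambdaMinus τK τM) * (lambdaPlus τK τM - lambdaPlus τK τM)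
      = (0:ℝ) from by ring, Real.sqrt_zero]
  rw [div_eq_div_iff hD.ne' hw0.ne']
  have hnum : lambdaPlus τK τM - τM⁻¹ - τK⁻¹ + 2 * τM⁻¹ * τK⁻¹ + 0
      = 2 * (Real.sqrt (τM⁻¹ * (1 - τK⁻¹)) * Real.sqrt (τK⁻¹ * (1 - τM⁻¹))) := by
    unfold lambdaPlus
    linear_combination hu + hv
  rw [hnum]
  apply sq_inj
  · positivity
  · nlinarith
  · have hcalc : (2 * (Real.sqrt (τM⁻¹ * (1 - τK⁻¹)) * Real.sqrt (τK⁻¹ * (1 - τM⁻¹)))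
        * Real.sqrt ((τM - 1) * (τK - 1))) ^ 2
        = 4 * (τM⁻¹ * (1 - τK⁻¹)) * (τK⁻¹ * (1 - τM⁻¹)) * ((τM - 1) * (τK - 1)) := by
      rw [show (2 * (Real.sqrt (τM⁻¹ * (1 - τK⁻¹)) * Real.sqrt (τK⁻¹ * (1 - τM⁻¹)))
          * Real.sqrt ((τM - 1) * (τK - 1))) ^ 2
          = 4 * Real.sqrt (τM⁻¹ * (1 - τK⁻¹)) ^ 2 * Real.sqrt (τK⁻¹ * (1 - τM⁻¹)) ^ 2
            * Real.sqrt ((τM - 1) * (τK - 1)) ^ 2 from by ring, hu, hv, hw2]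
    rw [hcalc]
    field_simp
    ring

lemma simpler_one : simplerFun τK τM 1 = 1 := by
  have ha0 := ha0 hτK hτM hτ; have hb0 := hb0 hτK hτM hτ
  have ha1 := ha1 hτK hτM hτ; have hb1 := hb1 hτK hτM hτ
  have hD : (0:ℝ) < 2 * (1 - τM⁻¹) * (1 - τK⁻¹) := by nlinarith
  have hq1 : ((1:ℝ) - lambdaMinus τK τM) * (1 - lambdaPlus τK τM)
      = (1 - τK⁻¹ - τM⁻¹) ^ 2 := by
    rw [quad_eq hτK hτM hτ 1]; ring
  unfold simplerFun
  rw [hq1, Real.sqrt_sq (by linarith), div_eq_one_iff_eq hD.ne']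
  ring

set_option maxHeartbeats 1000000 in
lemma zrho_mem_and_eq {ρ2 : ℝ} (h1 : rhoc2 τK τM < ρ2) (h2 : ρ2 ≤ 1) :
    zrho τK τM ρ2 ∈ Set.Ioc (lambdaPlus τK τM) 1 ∧ simplerFun τK τM (zrho τK τM ρ2) = ρ2 := by
  have ha0 := ha0 hτK hτM hτ; have hb0 := hb0 hτK hτM hτ
  have ha1 := ha1 hτK hτM hτ; have hb1 := hb1 hτK hτM hτ
  have hK0 : τK ≠ 0 := by intro h; rw [h] at hτK; linarith
  have hM0 : τM ≠ 0 := by intro h; rw [h] at hτM; linarith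
  have hD : (0:ℝ) < 2 * (1 - τM⁻¹) * (1 - τK⁻¹) := by nlinarith
  have hKM : (0:ℝ) < (τM - 1) * (τK - 1) := mul_pos (by linarith) (by linarith)
  have hw2 : Real.sqrt ((τM - 1) * (τK - 1)) ^ 2 = (τM - 1) * (τK - 1) :=
    Real.sq_sqrt hKM.le
  have hw0 : 0 < Real.sqrt ((τM - 1) * (τK - 1)) := Real.sqrt_pos.mpr hKM
  have hrc : rhoc2 τK τM = 1 / Real.sqrt ((τM - 1) * (τK - 1)) := rfl
  have hrc0 : 0 < rhoc2 τK τM := by rw [hrc]; positivity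
  have hr0 : 0 < ρ2 := lt_trans hrc0 h1
  have hrw : 1 < ρ2 * Real.sqrt ((τM - 1) * (τK - 1)) := by
    rw [hrc, div_lt_iff₀ hw0] at h1
    linarith
  have hkey : τK⁻¹ * τM⁻¹ < ρ2 ^ 2 * ((1 - τK⁻¹) * (1 - τM⁻¹)) := by
    have h3 : 1 < ρ2 ^ 2 * ((τM - 1) * (τK - 1)) := by nlinarith [hrw, hw0, hw2]
    have h4 : (τM - 1) * (τK - 1) * (τK⁻¹ * τM⁻¹) = (1 - τK⁻¹) * (1 - τM⁻¹) := by
      field_simp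
    nlinarith [h3, h4, mul_pos ha0 hb0]
  have hzz : zrho τK τM ρ2 * ρ2
      = (1 - τK⁻¹) * (1 - τM⁻¹) * ρ2 ^ 2 + (τK⁻¹ + τM⁻¹ - 2 * τK⁻¹ * τM⁻¹) * ρ2
        + τK⁻¹ * τM⁻¹ := by
    unfold zrho
    field_simp
    ring
  have hz1 : zrho τK τM ρ2 ≤ 1 := by
    have hfac : 0 ≤ (1 - τK⁻¹) * (1 - τM⁻¹) * ρ2 - τK⁻¹ * τM⁻¹ := by
      nlinarith [hkey, mul_nonneg (mul_nonneg (by linarith : (0:ℝ) ≤ 1 - τK⁻¹)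
        (by linarith : (0:ℝ) ≤ 1 - τM⁻¹)) (mul_nonneg hr0.le (by linarith : (0:ℝ) ≤ 1 - ρ2))]
    have hprod := mul_nonneg hfac (by linarith : (0:ℝ) ≤ 1 - ρ2)
    nlinarith [hzz, hprod, hr0]
  have hX : 0 < (1 - τK⁻¹) * (1 - τM⁻¹) * ρ2 ^ 2 - τK⁻¹ * τM⁻¹ := by nlinarith [hkey]
  have hu : Real.sqrt (τM⁻¹ * (1 - τK⁻¹)) ^ 2 = τM⁻¹ * (1 - τK⁻¹) :=
    Real.sq_sqrt (by nlinarith)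
  have hv : Real.sqrt (τK⁻¹ * (1 - τM⁻¹)) ^ 2 = τK⁻¹ * (1 - τM⁻¹) :=
    Real.sq_sqrt (by nlinarith)
  have hu0 : 0 ≤ Real.sqrt (τM⁻¹ * (1 - τK⁻¹)) := Real.sqrt_nonneg _
  have hv0 : 0 ≤ Real.sqrt (τK⁻¹ * (1 - τM⁻¹)) := Real.sqrt_nonneg _
  have htr : 2 * (Real.sqrt (τM⁻¹ * (1 - τK⁻¹)) * Real.sqrt (τK⁻¹ * (1 - τM⁻¹))) * ρ2
      < (1 - τK⁻¹) * (1 - τM⁻¹) * ρ2 ^ 2 + τK⁻¹ * τM⁻¹ := by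
    have huv2 : (Real.sqrt (τM⁻¹ * (1 - τK⁻¹)) * Real.sqrt (τK⁻¹ * (1 - τM⁻¹))) ^ 2
        = (τM⁻¹ * (1 - τK⁻¹)) * (τK⁻¹ * (1 - τM⁻¹)) := by
      rw [mul_pow, hu, hv]
    nlinarith [huv2, hX, mul_pos ha0 hb0,
      mul_nonneg (mul_nonneg hu0 hv0) hr0.le,
      sq_nonneg ((1 - τK⁻¹) * (1 - τM⁻¹) * ρ2 ^ 2 - τK⁻¹ * τM⁻¹)]
  have hlpz : lambdaPlus τK τM < zrho τK τM ρ2 := by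
    have h5 : lambdaPlus τK τM * ρ2 < zrho τK τM ρ2 * ρ2 := by
      unfold lambdaPlus
      rw [hzz]
      nlinarith [htr, hu, hv, hr0, mul_nonneg hu0 hv0]
    exact lt_of_mul_lt_mul_right h5 hr0.le
  have hRr : (2 * (1 - τM⁻¹) * (1 - τK⁻¹) * ρ2
        - (zrho τK τM ρ2 - τM⁻¹ - τK⁻¹ + 2 * τM⁻¹ * τK⁻¹)) * ρ2
      = (1 - τK⁻¹) * (1 - τM⁻¹) * ρ2 ^ 2 - τK⁻¹ * τM⁻¹ := by
    unfold zrho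
    field_simp
    ring
  have hR0 : 0 ≤ 2 * (1 - τM⁻¹) * (1 - τK⁻¹) * ρ2
      - (zrho τK τM ρ2 - τM⁻¹ - τK⁻¹ + 2 * τM⁻¹ * τK⁻¹) := by
    nlinarith [hRr, hX, hr0]
  have hq : (zrho τK τM ρ2 - lambdaMinus τK τM) * (zrho τK τM ρ2 - lambdaPlus τK τM)
      = (2 * (1 - τM⁻¹) * (1 - τK⁻¹) * ρ2
        - (zrho τK τM ρ2 - τM⁻¹ - τK⁻¹ + 2 * τM⁻¹ * τK⁻¹)) ^ 2 := by
    rw [quad_eq hτK hτM hτ]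
    unfold zrho
    field_simp
    ring
  have hsf : simplerFun τK τM (zrho τK τM ρ2) = ρ2 := by
    unfold simplerFun
    rw [hq, Real.sqrt_sq hR0, div_eq_iff hD.ne']
    ring
  exact ⟨⟨hlpz, hz1⟩, hsf⟩

end basic

end MasterEqAux

/-- Lemma B.2 of the paper: solvability of the limiting master equation. -/
theorem limiting_master_equation_solutions
    (τK τM : ℝ) (hτK : 1 < τK) (hτM : 1 < τM) (hτ : τK⁻¹ + τM⁻¹ < 1) :
    -- (a)
    (∀ z ∈ Set.Ioc (lambdaPlus τK τM) 1, masterLimitFun τK τM z = simplerFun τK τM z) ∧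
    StrictMonoOn (simplerFun τK τM) (Set.Icc (lambdaPlus τK τM) 1) ∧
    simplerFun τK τM (lambdaPlus τK τM) = rhoc2 τK τM ∧
    simplerFun τK τM 1 = 1 ∧
    -- (b)
    (∀ ρ2 : ℝ, 0 ≤ ρ2 → ρ2 ≤ rhoc2 τK τM →
      ¬ ∃ z, z ∈ Set.Ioc (lambdaPlus τK τM) 1 ∧ masterLimitFun τK τM z = ρ2) ∧
    -- (c)
    (∀ ρ2 : ℝ, rhoc2 τK τM < ρ2 → ρ2 ≤ 1 →
      (∃! z, z ∈ Set.Ioc (lambdaPlus τK τM) 1 ∧ masterLimitFun τK τM z = ρ2) ∧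
      zrho τK τM ρ2 ∈ Set.Ioc (lambdaPlus τK τM) 1 ∧
      masterLimitFun τK τM (zrho τK τM ρ2) = ρ2 ∧
      ρ2 = simplerFun τK τM (zrho τK τM ρ2)) := by
  classical
  obtain ⟨hms, hsm, hlp, hone, hzr⟩ :
      (∀ z ∈ Set.Ioc (lambdaPlus τK τM) 1, masterLimitFun τK τM z = simplerFun τK τM z) ∧
      StrictMonoOn (simplerFun τK τM) (Set.Icc (lambdaPlus τK τM) 1) ∧
      simplerFun τK τM (lambdaPlus τK τM) = rhoc2 τK τM ∧
      simplerFun τK τM 1 = 1 ∧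
      (∀ ρ2 : ℝ, rhoc2 τK τM < ρ2 → ρ2 ≤ 1 →
        zrho τK τM ρ2 ∈ Set.Ioc (lambdaPlus τK τM) 1 ∧
        simplerFun τK τM (zrho τK τM ρ2) = ρ2) :=
    ⟨fun z hz => MasterEqAux.master_eq_simpler hτK hτM hτ hz,
      MasterEqAux.simpler_strictMono hτK hτM hτ,
      MasterEqAux.simpler_lp hτK hτM hτ,
      MasterEqAux.simpler_one hτK hτM hτ,
      fun ρ2 h1 h2 => MasterEqAux.zrho_mem_and_eq hτK hτM hτ h1 h2⟩
  have hlp1 : lambdaPlus τK τM < 1 := MasterEqAux.lp_lt_one hτK hτM hτ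
  have hlpmem : lambdaPlus τK τM ∈ Set.Icc (lambdaPlus τK τM) 1 := ⟨le_refl _, hlp1.le⟩
  refine ⟨hms, hsm, hlp, hone, ?_, ?_⟩
  · -- (b)
    rintro ρ2 h0 h1 ⟨z, hz, hM⟩
    have hzIcc : z ∈ Set.Icc (lambdaPlus τK τM) 1 := ⟨hz.1.le, hz.2⟩
    have := hsm hlpmem hzIcc hz.1
    rw [hlp, ← hms z hz, hM] at this
    linarith
  · -- (c)
    intro ρ2 h1 h2
    obtain ⟨hmem, heq⟩ := hzr ρ2 h1 h2
    have hMz : masterLimitFun τK τM (zrho τK τM ρ2) = ρ2 := by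
      rw [hms _ hmem, heq]
    refine ⟨⟨zrho τK τM ρ2, ⟨hmem, hMz⟩, ?_⟩, hmem, hMz, heq.symm⟩
    rintro y ⟨hy, hMy⟩
    have hyIcc : y ∈ Set.Icc (lambdaPlus τK τM) 1 := ⟨hy.1.le, hy.2⟩
    have hzIcc : zrho τK τM ρ2 ∈ Set.Icc (lambdaPlus τK τM) 1 := ⟨hmem.1.le, hmem.2⟩
    apply hsm.injOn hyIcc hzIcc
    rw [← hms _ hy, hMy, ← hms _ hmem, hMz]


end
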